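/- arXiv:1401.3212 — 2 statements merged into one kernel-verified Lean document; each statement's English description precedes it below -/
import Mathlib

section
/- If the coefficients a_n satisfy the recurrence (n+r)(n+r-1)(n+r-2)(n+r-3)a_n = -p_0(n+r-3)(n+r-2)a_{n-2} - γ(n+r-3)² a_{n-3} + Λ a_{n-4} for all n ≥ 4, with r ∈ {0,1,2,3} and prescribed a_0, a_1, a_2, a_3 (taken so the recurrence is well-defined), then the power series Σ a_n z^n has infinite radius of convergence. -/
set_option maxHeartbeats 1000000

/-- Key coefficient bound extracted from the Frobenius recurrence. -/
lemma frobenius_key (p₀ γ Λ : ℝ) (r : ℕ) (a : ℕ → ℝ)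
    (hrec : ∀ n : ℕ, 4 ≤ n →
      ((n : ℝ) + r) * ((n : ℝ) + r - 1) * ((n : ℝ) + r - 2) * ((n : ℝ) + r - 3) * a n =
        -p₀ * ((n : ℝ) + r - 3) * ((n : ℝ) + r - 2) * a (n - 2)
          - γ * ((n : ℝ) + r - 3) ^ 2 * a (n - 3) + Λ * a (n - 4)) :
    ∀ n : ℕ, 4 ≤ n →
      (n : ℝ) * ((n : ℝ) - 1) * |a n| ≤
        |p₀| * |a (n - 2)| + |γ| * |a (n - 3)| + |Λ| * |a (n - 4)| := by
  intro n hn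
  have hn4 : (4 : ℝ) ≤ (n : ℝ) := by exact_mod_cast hn
  have hr0 : (0 : ℝ) ≤ (r : ℝ) := by positivity
  set x : ℝ := (n : ℝ) + r with hxdef
  have hx : (4 : ℝ) ≤ x := by simp only [hxdef]; linarith
  have E := hrec n hn
  have h2 : (0 : ℝ) ≤ x - 2 := by linarith
  have h3 : (0 : ℝ) ≤ x - 3 := by linarith
  have h1 : (0 : ℝ) ≤ x - 1 := by linarith
  have h0 : (0 : ℝ) ≤ x := by linarith
  have habs : x * (x - 1) * (x - 2) * (x - 3) * |a n| ≤
      |p₀| * (x - 3) * (x - 2) * |a (n - 2)| + |γ| * (x - 3) ^ 2 * |a (n - 3)|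
        + |Λ| * |a (n - 4)| := by
    have e1 : x * (x - 1) * (x - 2) * (x - 3) * |a n|
        = |x * (x - 1) * (x - 2) * (x - 3) * a n| := by
      rw [abs_mul]
      congr 1
      rw [abs_of_nonneg (by positivity)]
    rw [e1, E]
    calc |(-p₀ * (x - 3) * (x - 2) * a (n - 2) - γ * (x - 3) ^ 2 * a (n - 3)) + Λ * a (n - 4)|
        ≤ |(-p₀ * (x - 3) * (x - 2) * a (n - 2) - γ * (x - 3) ^ 2 * a (n - 3))| + |Λ * a (n - 4)| :=
          abs_add_le _ _
      _ ≤ |(-p₀ * (x - 3) * (x - 2) * a (n - 2))| + |γ * (x - 3) ^ 2 * a (n - 3)|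
          + |Λ * a (n - 4)| := by
          have := abs_sub (-p₀ * (x - 3) * (x - 2) * a (n - 2)) (γ * (x - 3) ^ 2 * a (n - 3))
          linarith
      _ = |p₀| * (x - 3) * (x - 2) * |a (n - 2)| + |γ| * (x - 3) ^ 2 * |a (n - 3)|
          + |Λ| * |a (n - 4)| := by
          rw [abs_mul, abs_mul, abs_mul, abs_mul, abs_mul, abs_mul, abs_neg,
            abs_of_nonneg h3, abs_of_nonneg h2, abs_of_nonneg (by positivity : (0:ℝ) ≤ (x-3)^2)]
  -- now divide by (x-2)*(x-3) ≥ 2 after bounding the RHS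
  have hRHS : |p₀| * (x - 3) * (x - 2) * |a (n - 2)| + |γ| * (x - 3) ^ 2 * |a (n - 3)|
        + |Λ| * |a (n - 4)| ≤
      ((x - 2) * (x - 3)) * (|p₀| * |a (n - 2)| + |γ| * |a (n - 3)| + |Λ| * |a (n - 4)|) := by
    have b1 : (x - 3) ^ 2 ≤ (x - 2) * (x - 3) := by nlinarith
    have b2 : (1 : ℝ) ≤ (x - 2) * (x - 3) := by nlinarith
    nlinarith [abs_nonneg (a (n - 2)), abs_nonneg (a (n - 3)), abs_nonneg (a (n - 4)),
      abs_nonneg p₀, abs_nonneg γ, abs_nonneg Λ,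
      mul_nonneg (abs_nonneg γ) (abs_nonneg (a (n - 3))),
      mul_nonneg (abs_nonneg Λ) (abs_nonneg (a (n - 4)))]
  have hpos : (0 : ℝ) < (x - 2) * (x - 3) := by nlinarith
  have hdiv : x * (x - 1) * |a n| ≤ |p₀| * |a (n - 2)| + |γ| * |a (n - 3)| + |Λ| * |a (n - 4)| := by
    have hh : ((x - 2) * (x - 3)) * (x * (x - 1) * |a n|) ≤
        ((x - 2) * (x - 3)) * (|p₀| * |a (n - 2)| + |γ| * |a (n - 3)| + |Λ| * |a (n - 4)|) := by
      have e : ((x - 2) * (x - 3)) * (x * (x - 1) * |a n|)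
          = x * (x - 1) * (x - 2) * (x - 3) * |a n| := by ring
      rw [e]; exact habs.trans hRHS
    exact le_of_mul_le_mul_left hh hpos
  have hmono : (n : ℝ) * ((n : ℝ) - 1) * |a n| ≤ x * (x - 1) * |a n| := by
    have hxn : (n : ℝ) ≤ x := by simp only [hxdef]; linarith
    have hfac : (n : ℝ) * ((n : ℝ) - 1) ≤ x * (x - 1) := by nlinarith
    exact mul_le_mul_of_nonneg_right hfac (abs_nonneg (a n))
  linarith

/-- The Frobenius recurrence yields a power series with infinite radius of convergence. -/
theorem frobenius_series_entire (p₀ γ Λ : ℝ) (r : ℕ) (hr : r ≤ 3) (a : ℕ → ℝ)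
    (hrec : ∀ n : ℕ, 4 ≤ n →
      ((n : ℝ) + r) * ((n : ℝ) + r - 1) * ((n : ℝ) + r - 2) * ((n : ℝ) + r - 3) * a n =
        -p₀ * ((n : ℝ) + r - 3) * ((n : ℝ) + r - 2) * a (n - 2)
          - γ * ((n : ℝ) + r - 3) ^ 2 * a (n - 3) + Λ * a (n - 4)) :
    ∀ z : ℝ, Summable (fun n : ℕ => a n * z ^ n) := by
  have key := frobenius_key p₀ γ Λ r a hrec
  intro z
  set q : ℝ := min 1 (1 / (2 * (|z| + 1))) with hqdef
  have hq : (0 : ℝ) < q := lt_min one_pos (by positivity)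
  have hq1 : q ≤ 1 := min_le_left _ _
  have hqz : q * |z| ≤ 1 / 2 := by
    have h1 : q ≤ 1 / (2 * (|z| + 1)) := min_le_right _ _
    have h2 : q * |z| ≤ (1 / (2 * (|z| + 1))) * |z| :=
      mul_le_mul_of_nonneg_right h1 (abs_nonneg z)
    have h3 : (1 / (2 * (|z| + 1))) * |z| ≤ 1 / 2 := by
      rw [div_mul_eq_mul_div, div_le_div_iff₀ (by positivity) (by norm_num)]
      nlinarith [abs_nonneg z]
    linarith
  set M : ℝ := |p₀| + |γ| + |Λ| with hMdef
  have hM0 : (0 : ℝ) ≤ M := by positivity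
  obtain ⟨N, hN⟩ := exists_nat_ge (M / q ^ 4 + 4)
  have hN4 : (4 : ℝ) ≤ (N : ℝ) := by
    have : (0 : ℝ) ≤ M / q ^ 4 := by positivity
    linarith
  have hNn : 4 ≤ N := by exact_mod_cast hN4
  have hMN : M ≤ (N : ℝ) * q ^ 4 := by
    rw [div_add' _ _ _ (by positivity), div_le_iff₀ (by positivity)] at hN
    nlinarith [pow_pos hq 4]
  set K : ℝ := (Finset.range (N + 1)).sup' (by simp) (fun m => |a m| / q ^ m) with hKdef
  have hKle : ∀ m, m ≤ N → |a m| / q ^ m ≤ K := by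
    intro m hm
    exact Finset.le_sup' (fun k => |a k| / q ^ k) (Finset.mem_range.mpr (Nat.lt_succ_of_le hm))
  have hK0 : (0 : ℝ) ≤ K :=
    le_trans (by positivity : (0:ℝ) ≤ |a 0| / q ^ 0) (hKle 0 (Nat.zero_le N))
  have hbd : ∀ n, |a n| ≤ K * q ^ n := by
    intro n
    induction n using Nat.strong_induction_on with
    | _ n ih =>
      by_cases hn : n ≤ N
      · have := hKle n hn
        rw [div_le_iff₀ (pow_pos hq n)] at this
        linarith
      · push_neg at hn
        have h4 : 4 ≤ n := by omega
        have e2 := ih (n - 2) (by omega)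
        have e3 := ih (n - 3) (by omega)
        have e4 := ih (n - 4) (by omega)
        have p2 : q ^ (n - 2) ≤ q ^ (n - 4) := pow_le_pow_of_le_one hq.le hq1 (by omega)
        have p3 : q ^ (n - 3) ≤ q ^ (n - 4) := pow_le_pow_of_le_one hq.le hq1 (by omega)
        have b2 : |p₀| * |a (n - 2)| ≤ |p₀| * (K * q ^ (n - 4)) :=
          mul_le_mul_of_nonneg_left
            (e2.trans (mul_le_mul_of_nonneg_left p2 hK0)) (abs_nonneg p₀)
        have b3 : |γ| * |a (n - 3)| ≤ |γ| * (K * q ^ (n - 4)) :=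
          mul_le_mul_of_nonneg_left
            (e3.trans (mul_le_mul_of_nonneg_left p3 hK0)) (abs_nonneg γ)
        have b4 : |Λ| * |a (n - 4)| ≤ |Λ| * (K * q ^ (n - 4)) :=
          mul_le_mul_of_nonneg_left e4 (abs_nonneg Λ)
        have step1 : |p₀| * |a (n - 2)| + |γ| * |a (n - 3)| + |Λ| * |a (n - 4)|
            ≤ M * (K * q ^ (n - 4)) := by
          have : M * (K * q ^ (n - 4)) = |p₀| * (K * q ^ (n - 4)) + |γ| * (K * q ^ (n - 4))
              + |Λ| * (K * q ^ (n - 4)) := by rw [hMdef]; ring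
          linarith
        have hpowq : q ^ 4 * q ^ (n - 4) = q ^ n := by
          rw [← pow_add]; congr 1; omega
        have step2 : M * (K * q ^ (n - 4)) ≤ (N : ℝ) * (K * q ^ n) := by
          have h := mul_le_mul_of_nonneg_right hMN
            (by positivity : (0 : ℝ) ≤ K * q ^ (n - 4))
          calc M * (K * q ^ (n - 4)) ≤ (N : ℝ) * q ^ 4 * (K * q ^ (n - 4)) := h
            _ = (N : ℝ) * (K * (q ^ 4 * q ^ (n - 4))) := by ring
            _ = (N : ℝ) * (K * q ^ n) := by rw [hpowq]
        have hnn : (N : ℝ) ≤ (n : ℝ) * ((n : ℝ) - 1) := by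
          have h1 : (N : ℝ) + 1 ≤ (n : ℝ) := by exact_mod_cast hn
          nlinarith
        have step3 : (N : ℝ) * (K * q ^ n) ≤ ((n : ℝ) * ((n : ℝ) - 1)) * (K * q ^ n) :=
          mul_le_mul_of_nonneg_right hnn (by positivity)
        have hkey := key n h4
        have npos : (0 : ℝ) < (n : ℝ) * ((n : ℝ) - 1) := by
          have : (4 : ℝ) ≤ (n : ℝ) := by exact_mod_cast h4
          nlinarith
        have final : ((n : ℝ) * ((n : ℝ) - 1)) * |a n|
            ≤ ((n : ℝ) * ((n : ℝ) - 1)) * (K * q ^ n) := by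
          calc ((n : ℝ) * ((n : ℝ) - 1)) * |a n|
              = (n : ℝ) * ((n : ℝ) - 1) * |a n| := by ring
            _ ≤ |p₀| * |a (n - 2)| + |γ| * |a (n - 3)| + |Λ| * |a (n - 4)| := hkey
            _ ≤ M * (K * q ^ (n - 4)) := step1
            _ ≤ (N : ℝ) * (K * q ^ n) := step2
            _ ≤ ((n : ℝ) * ((n : ℝ) - 1)) * (K * q ^ n) := step3
        exact le_of_mul_le_mul_left final npos
  -- comparison with geometric series
  have hgeo : Summable (fun n : ℕ => K * (1 / 2 : ℝ) ^ n) :=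
    (summable_geometric_of_lt_one (by norm_num) (by norm_num)).mul_left K
  have habs : Summable (fun n : ℕ => |a n * z ^ n|) := by
    apply Summable.of_nonneg_of_le (fun n => abs_nonneg _) _ hgeo
    intro n
    calc |a n * z ^ n| = |a n| * |z| ^ n := by rw [abs_mul, abs_pow]
      _ ≤ (K * q ^ n) * |z| ^ n :=
          mul_le_mul_of_nonneg_right (hbd n) (by positivity)
      _ = K * (q * |z|) ^ n := by rw [mul_pow]; ring
      _ ≤ K * (1 / 2) ^ n :=
          mul_le_mul_of_nonneg_left (pow_le_pow_left₀ (by positivity) hqz n) hK0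
  exact habs.of_abs
end

section
/- For the recurrence a_n = (−p₀(n−3)(n−2)a_{n−2} − γ(n−3)²a_{n−3} + Λa_{n−4}) / (n(n−1)(n−2)(n−3)) for n ≥ 4 (case r = 0, a₀,…,a₃ given), there exist constants C > 0 and N such that |a_n| ≤ C/((n−3)! )^{1/2} for all n ≥ N; in particular a_n → 0. -/
open Real Filter

private lemma sqrtFact_pos (m : ℕ) : 0 < Real.sqrt (m.factorial : ℝ) :=
  Real.sqrt_pos.mpr (by exact_mod_cast m.factorial_pos)

private lemma sqA (m : ℕ) :
    Real.sqrt ((m+2).factorial : ℝ) ≤ ((m:ℝ)+5) * Real.sqrt (m.factorial : ℝ) := by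
  have h : ((m+2).factorial : ℝ) = (((m:ℝ)+2) * ((m:ℝ)+1)) * (m.factorial : ℝ) := by
    rw [Nat.factorial_succ, Nat.factorial_succ]; push_cast; ring
  rw [h, Real.sqrt_mul (by positivity)]
  have h2 : Real.sqrt (((m:ℝ)+2) * ((m:ℝ)+1)) ≤ (m:ℝ)+5 := by
    rw [show ((m:ℝ)+5) = Real.sqrt (((m:ℝ)+5)^2) from (Real.sqrt_sq (by positivity)).symm]
    apply Real.sqrt_le_sqrt; nlinarith [show (0:ℝ) ≤ (m:ℝ) from Nat.cast_nonneg m]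
  exact mul_le_mul_of_nonneg_right h2 (Real.sqrt_nonneg _)

private lemma sqB (m : ℕ) :
    Real.sqrt ((m+3).factorial : ℝ) ≤
      ((m:ℝ)+6) * Real.sqrt ((m:ℝ)+6) * Real.sqrt (m.factorial : ℝ) := by
  have h : ((m+3).factorial : ℝ) = (((m:ℝ)+3) * ((m:ℝ)+2) * ((m:ℝ)+1)) * (m.factorial : ℝ) := by
    rw [Nat.factorial_succ, Nat.factorial_succ, Nat.factorial_succ]; push_cast; ring
  rw [h, Real.sqrt_mul (by positivity)]
  have h2 : Real.sqrt (((m:ℝ)+3) * ((m:ℝ)+2) * ((m:ℝ)+1)) ≤ ((m:ℝ)+6) * Real.sqrt ((m:ℝ)+6) := by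
    have e : ((m:ℝ)+6) * Real.sqrt ((m:ℝ)+6) = Real.sqrt (((m:ℝ)+6)^2 * ((m:ℝ)+6)) := by
      rw [Real.sqrt_mul (by positivity), Real.sqrt_sq (by positivity)]
    rw [e]
    apply Real.sqrt_le_sqrt; nlinarith [show (0:ℝ) ≤ (m:ℝ) from Nat.cast_nonneg m]
  exact mul_le_mul_of_nonneg_right h2 (Real.sqrt_nonneg _)

private lemma sqC (m : ℕ) :
    Real.sqrt ((m+4).factorial : ℝ) ≤ ((m:ℝ)+7)^2 * Real.sqrt (m.factorial : ℝ) := by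
  have h : ((m+4).factorial : ℝ) =
      (((m:ℝ)+4) * ((m:ℝ)+3) * ((m:ℝ)+2) * ((m:ℝ)+1)) * (m.factorial : ℝ) := by
    rw [Nat.factorial_succ, Nat.factorial_succ, Nat.factorial_succ, Nat.factorial_succ]
    push_cast; ring
  rw [h, Real.sqrt_mul (by positivity)]
  have h2 : Real.sqrt (((m:ℝ)+4) * ((m:ℝ)+3) * ((m:ℝ)+2) * ((m:ℝ)+1)) ≤ ((m:ℝ)+7)^2 := by
    rw [show (((m:ℝ)+7)^2) = Real.sqrt ((((m:ℝ)+7)^2)^2) from (Real.sqrt_sq (by positivity)).symm]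
    apply Real.sqrt_le_sqrt; nlinarith [show (0:ℝ) ≤ (m:ℝ) from Nat.cast_nonneg m]
  exact mul_le_mul_of_nonneg_right h2 (Real.sqrt_nonneg _)

set_option maxHeartbeats 1000000 in
/-- The Frobenius coefficients (case r = 0) decay superpolynomially: |aₙ| ≤ C/√((n−3)!)
eventually, and in particular aₙ → 0. -/
theorem frobenius_coefficients_decay (p₀ γ Λ : ℝ) (a : ℕ → ℝ)
    (hrec : ∀ n : ℕ, 4 ≤ n →
      a n = (-p₀ * ((n : ℝ) - 3) * ((n : ℝ) - 2) * a (n - 2)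
              - γ * ((n : ℝ) - 3) ^ 2 * a (n - 3) + Λ * a (n - 4))
            / ((n : ℝ) * ((n : ℝ) - 1) * ((n : ℝ) - 2) * ((n : ℝ) - 3))) :
    (∃ C > (0 : ℝ), ∃ N : ℕ, ∀ n ≥ N,
        |a n| ≤ C / Real.sqrt ((Nat.factorial (n - 3) : ℝ))) ∧
      Filter.Tendsto a Filter.atTop (nhds 0) := by
  set K : ℝ := |p₀| + |γ| + |Λ| + 1 with hKdef
  have hK1 : (1:ℝ) ≤ K := by
    have := abs_nonneg p₀; have := abs_nonneg γ; have := abs_nonneg Λ; rw [hKdef]; linarith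
  set N : ℕ := max 260 ⌈(256:ℝ) * K^2⌉₊ with hNdef
  have hN260 : 260 ≤ N := le_max_left _ _
  have hNK : ∀ n : ℕ, N ≤ n → 256 * K^2 ≤ (n:ℝ) := by
    intro n hn
    have h1 : (256:ℝ)*K^2 ≤ (⌈(256:ℝ)*K^2⌉₊ : ℝ) := Nat.le_ceil _
    have h2 : (⌈(256:ℝ)*K^2⌉₊ : ℕ) ≤ n := le_trans (le_max_right _ _) hn
    exact h1.trans (by exact_mod_cast h2)
  set C : ℝ := 1 + |a N| * Real.sqrt (((N:ℕ)-3).factorial : ℝ)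
      + |a (N+1)| * Real.sqrt ((N+1-3).factorial : ℝ)
      + |a (N+2)| * Real.sqrt ((N+2-3).factorial : ℝ)
      + |a (N+3)| * Real.sqrt ((N+3-3).factorial : ℝ) with hCdef
  have t0 := mul_nonneg (abs_nonneg (a N)) (Real.sqrt_nonneg (((N:ℕ)-3).factorial : ℝ))
  have t1 := mul_nonneg (abs_nonneg (a (N+1))) (Real.sqrt_nonneg ((N+1-3).factorial : ℝ))
  have t2 := mul_nonneg (abs_nonneg (a (N+2))) (Real.sqrt_nonneg ((N+2-3).factorial : ℝ))
  have t3 := mul_nonneg (abs_nonneg (a (N+3))) (Real.sqrt_nonneg ((N+3-3).factorial : ℝ))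
  have hC1 : (1:ℝ) ≤ C := by rw [hCdef]; linarith
  have hC0 : (0:ℝ) < C := by linarith
  have main : ∀ n k : ℕ, k ≤ n → N ≤ k → |a k| ≤ C / Real.sqrt ((k-3).factorial : ℝ) := by
    intro n
    induction n with
    | zero => intro k hk hNk; omega
    | succ n ih =>
      intro k hk hNk
      by_cases hkn : k ≤ n
      · exact ih k hkn hNk
      · by_cases hbase : k ≤ N + 3
        · -- base cases
          rw [le_div_iff₀ (sqrtFact_pos (k-3))]
          have h4 : k = N ∨ k = N+1 ∨ k = N+2 ∨ k = N+3 := by omega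
          rcases h4 with h|h|h|h <;> subst h <;> rw [hCdef] <;> linarith
        · -- inductive step
          have hk264 : N + 4 ≤ k := by omega
          have h2 := ih (k-2) (by omega) (by omega)
          have h3 := ih (k-3) (by omega) (by omega)
          have h4 := ih (k-4) (by omega) (by omega)
          rw [show k - 2 - 3 = k - 5 from by omega] at h2
          rw [show k - 3 - 3 = k - 6 from by omega] at h3
          rw [show k - 4 - 3 = k - 7 from by omega] at h4
          have sA' := sqA (k-5); have sB' := sqB (k-6); have sC' := sqC (k-7)
          rw [show k-5+2 = k-3 from by omega] at sA'
          rw [show k-6+3 = k-3 from by omega] at sB'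
          rw [show k-7+4 = k-3 from by omega] at sC'
          set x : ℝ := (k:ℝ) with hxdef
          have e5 : ((k-5:ℕ):ℝ) + 5 = x := by
            have h5 : 5 ≤ k := by omega
            rw [Nat.cast_sub h5]; push_cast; ring
          have e6 : ((k-6:ℕ):ℝ) + 6 = x := by
            have h6 : 6 ≤ k := by omega
            rw [Nat.cast_sub h6]; push_cast; ring
          have e7 : ((k-7:ℕ):ℝ) + 7 = x := by
            have h7 : 7 ≤ k := by omega
            rw [Nat.cast_sub h7]; push_cast; ring
          rw [e5] at sA'; rw [e6] at sB'; rw [e7] at sC'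
          have hx260 : (260:ℝ) ≤ x := by
            have hh : (260:ℕ) ≤ k := by omega
            rw [hxdef]; exact_mod_cast hh
          have hx0 : (0:ℝ) ≤ x := by linarith
          have hxK : 256 * K^2 ≤ x := hNK k (by omega)
          set s : ℝ := Real.sqrt x with hsdef
          have hs0 : 0 ≤ s := Real.sqrt_nonneg x
          have hs1 : 1 ≤ s := Real.one_le_sqrt.mpr (by linarith)
          have hss : s * s = x := Real.mul_self_sqrt hx0
          have hsK : 16 * K ≤ s := by
            have h1 : Real.sqrt (256*K^2) ≤ s := Real.sqrt_le_sqrt hxK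
            have h2 : Real.sqrt (256*K^2) = 16*K := by
              rw [show (256:ℝ)*K^2 = (16*K)^2 from by ring, Real.sqrt_sq (by linarith)]
            linarith
          set S3 : ℝ := Real.sqrt ((k-3).factorial : ℝ) with hS3def
          set S5 : ℝ := Real.sqrt ((k-5).factorial : ℝ) with hS5def
          set S6 : ℝ := Real.sqrt ((k-6).factorial : ℝ) with hS6def
          set S7 : ℝ := Real.sqrt ((k-7).factorial : ℝ) with hS7def
          have hS3pos : 0 < S3 := sqrtFact_pos _
          have hS5pos : 0 < S5 := sqrtFact_pos _
          have hS6pos : 0 < S6 := sqrtFact_pos _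
          have hS7pos : 0 < S7 := sqrtFact_pos _
          -- products bounds
          have g2 : |a (k-2)| * S3 ≤ C * x := by
            calc |a (k-2)| * S3 ≤ (C / S5) * (x * S5) :=
                  mul_le_mul h2 sA' (Real.sqrt_nonneg _) (div_nonneg hC0.le hS5pos.le)
              _ = C * x := by field_simp
          have g3 : |a (k-3)| * S3 ≤ C * (x * s) := by
            calc |a (k-3)| * S3 ≤ (C / S6) * (x * s * S6) :=
                  mul_le_mul h3 sB' (Real.sqrt_nonneg _) (div_nonneg hC0.le hS6pos.le)
              _ = C * (x * s) := by field_simp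
          have g4 : |a (k-4)| * S3 ≤ C * x^2 := by
            calc |a (k-4)| * S3 ≤ (C / S7) * (x^2 * S7) :=
                  mul_le_mul h4 sC' (Real.sqrt_nonneg _) (div_nonneg hC0.le hS7pos.le)
              _ = C * x^2 := by field_simp
          -- positivity of denominator
          have hD : (0:ℝ) < x * (x-1) * (x-2) * (x-3) := by
            have q0 : (0:ℝ) < x := by linarith
            have q1 : (0:ℝ) < x - 1 := by linarith
            have q2 : (0:ℝ) < x - 2 := by linarith
            have q3 : (0:ℝ) < x - 3 := by linarith
            exact mul_pos (mul_pos (mul_pos q0 q1) q2) q3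
          have hr := hrec k (by omega)
          rw [← hxdef] at hr
          have htri : |(-p₀ * (x - 3) * (x - 2) * a (k - 2)
              - γ * (x - 3) ^ 2 * a (k - 3) + Λ * a (k - 4))|
              ≤ |p₀| * ((x-3) * (x-2)) * |a (k-2)| + |γ| * (x-3)^2 * |a (k-3)|
                + |Λ| * |a (k-4)| := by
            have u1 := abs_add_le (-p₀ * (x - 3) * (x - 2) * a (k - 2)
                - γ * (x - 3) ^ 2 * a (k - 3)) (Λ * a (k - 4))
            have u2 := abs_sub (-p₀ * (x - 3) * (x - 2) * a (k - 2))
                (γ * (x - 3) ^ 2 * a (k - 3))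
            have e1 : |(-p₀ * (x - 3) * (x - 2) * a (k - 2))|
                = |p₀| * ((x-3) * (x-2)) * |a (k-2)| := by
              rw [abs_mul, abs_mul, abs_mul, abs_neg, abs_of_nonneg (by linarith : (0:ℝ) ≤ x - 3),
                abs_of_nonneg (by linarith : (0:ℝ) ≤ x - 2)]
              ring
            have e2 : |γ * (x - 3) ^ 2 * a (k - 3)| = |γ| * (x-3)^2 * |a (k-3)| := by
              rw [abs_mul, abs_mul, abs_pow, abs_of_nonneg (by linarith : (0:ℝ) ≤ x - 3)]
            have e3 : |Λ * a (k - 4)| = |Λ| * |a (k-4)| := abs_mul _ _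
            rw [e1] at u2; rw [e2] at u2; rw [e3] at u1
            linarith
          rw [hr, abs_div, abs_of_pos hD, div_le_div_iff₀ hD hS3pos]
          calc |(-p₀ * (x - 3) * (x - 2) * a (k - 2)
                - γ * (x - 3) ^ 2 * a (k - 3) + Λ * a (k - 4))| * S3
              ≤ (|p₀| * ((x-3) * (x-2)) * |a (k-2)| + |γ| * (x-3)^2 * |a (k-3)|
                + |Λ| * |a (k-4)|) * S3 :=
                mul_le_mul_of_nonneg_right htri hS3pos.le
            _ = |p₀| * ((x-3) * (x-2)) * (|a (k-2)| * S3) + |γ| * (x-3)^2 * (|a (k-3)| * S3)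
                + |Λ| * (|a (k-4)| * S3) := by ring
            _ ≤ |p₀| * ((x-3) * (x-2)) * (C * x) + |γ| * (x-3)^2 * (C * (x * s))
                + |Λ| * (C * x^2) := by
                have c2 : (0:ℝ) ≤ |p₀| * ((x-3) * (x-2)) := by
                  apply mul_nonneg (abs_nonneg _); nlinarith
                have c3 : (0:ℝ) ≤ |γ| * (x-3)^2 := mul_nonneg (abs_nonneg _) (sq_nonneg _)
                exact add_le_add (add_le_add (mul_le_mul_of_nonneg_left g2 c2)
                  (mul_le_mul_of_nonneg_left g3 c3))
                  (mul_le_mul_of_nonneg_left g4 (abs_nonneg _))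
            _ ≤ C * K * (x^3 * s) := by
                have q1 : |p₀| * ((x-3) * (x-2)) * (C * x) ≤ C * (|p₀| * (x^3 * s)) := by
                  have hin : (x-3)*(x-2)*x ≤ x^3 * s := by
                    have w1 : (x-3)*(x-2) ≤ x*x :=
                      mul_le_mul (by linarith) (by linarith) (by linarith) hx0
                    have w2 : (x-3)*(x-2)*x ≤ x*x*x := mul_le_mul_of_nonneg_right w1 hx0
                    have w3 : x*x*x ≤ x*x*x*s :=
                      le_mul_of_one_le_right (by positivity) hs1
                    calc (x-3)*(x-2)*x ≤ x*x*x := w2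
                      _ ≤ x*x*x*s := w3
                      _ = x^3*s := by ring
                  calc |p₀| * ((x-3) * (x-2)) * (C * x)
                      = |p₀| * C * ((x-3)*(x-2)*x) := by ring
                    _ ≤ |p₀| * C * (x^3 * s) := by
                        apply mul_le_mul_of_nonneg_left hin (mul_nonneg (abs_nonneg _) hC0.le)
                    _ = C * (|p₀| * (x^3 * s)) := by ring
                have q2 : |γ| * (x-3)^2 * (C * (x * s)) ≤ C * (|γ| * (x^3 * s)) := by
                  have hin : (x-3)^2 * (x * s) ≤ x^3 * s := by
                    have w1 : (x-3)^2 ≤ x^2 := pow_le_pow_left₀ (by linarith) (by linarith) 2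
                    have w2 : (x-3)^2*(x*s) ≤ x^2*(x*s) :=
                      mul_le_mul_of_nonneg_right w1 (mul_nonneg hx0 hs0)
                    calc (x-3)^2*(x*s) ≤ x^2*(x*s) := w2
                      _ = x^3*s := by ring
                  calc |γ| * (x-3)^2 * (C * (x * s))
                      = |γ| * C * ((x-3)^2 * (x * s)) := by ring
                    _ ≤ |γ| * C * (x^3 * s) := by
                        apply mul_le_mul_of_nonneg_left hin (mul_nonneg (abs_nonneg _) hC0.le)
                    _ = C * (|γ| * (x^3 * s)) := by ring
                have q3 : |Λ| * (C * x^2) ≤ C * (|Λ| * (x^3 * s)) := by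
                  have hin : x^2 ≤ x^3 * s := by
                    have w1 : (1:ℝ)*1 ≤ x*s := mul_le_mul (by linarith) hs1 (by norm_num) hx0
                    have w2 : x^2*1 ≤ x^2*(x*s) :=
                      mul_le_mul_of_nonneg_left (by linarith) (by positivity)
                    calc x^2 = x^2*1 := by ring
                      _ ≤ x^2*(x*s) := w2
                      _ = x^3*s := by ring
                  calc |Λ| * (C * x^2) = |Λ| * C * x^2 := by ring
                    _ ≤ |Λ| * C * (x^3 * s) := by
                        apply mul_le_mul_of_nonneg_left hin (mul_nonneg (abs_nonneg _) hC0.le)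
                    _ = C * (|Λ| * (x^3 * s)) := by ring
                have hxs : (0:ℝ) ≤ x^3 * s := by positivity
                have : C * K * (x^3*s) = C * (|p₀| * (x^3*s)) + C * (|γ| * (x^3*s))
                    + C * (|Λ| * (x^3*s)) + C * (x^3*s) := by rw [hKdef]; ring
                linarith [q1, q2, q3, mul_nonneg hC0.le hxs]
            _ ≤ C * (x^4 / 16) := by
                have h1 : K * (x^3 * s) ≤ (s/16) * (x^3 * s) := by
                  apply mul_le_mul_of_nonneg_right (by linarith) (by positivity)
                have h2 : (s/16) * (x^3 * s) = x^4 / 16 := by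
                  rw [show (s/16) * (x^3 * s) = x^3 * (s*s) / 16 from by ring, hss]; ring
                calc C * K * (x^3 * s) = C * (K * (x^3*s)) := by ring
                  _ ≤ C * ((s/16) * (x^3*s)) := mul_le_mul_of_nonneg_left h1 hC0.le
                  _ = C * (x^4/16) := by rw [h2]
            _ ≤ C * (x * (x-1) * (x-2) * (x-3)) := by
                apply mul_le_mul_of_nonneg_left _ hC0.le
                have f0 : (0:ℝ) ≤ x/2 := by linarith
                have w1 : (x/2)*(x/2) ≤ x*(x-1) :=
                  mul_le_mul (by linarith) (by linarith) f0 (by linarith)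
                have w2 : (x/2)*(x/2)*(x/2) ≤ x*(x-1)*(x-2) :=
                  mul_le_mul w1 (by linarith) f0
                    (mul_nonneg (by linarith) (by linarith))
                have w3 : (x/2)*(x/2)*(x/2)*(x/2) ≤ x*(x-1)*(x-2)*(x-3) :=
                  mul_le_mul w2 (by linarith) f0
                    (mul_nonneg (mul_nonneg (by linarith) (by linarith)) (by linarith))
                calc x^4/16 = (x/2)*(x/2)*(x/2)*(x/2) := by ring
                  _ ≤ x*(x-1)*(x-2)*(x-3) := w3
  constructor
  · exact ⟨C, hC0, N, fun n hn => main n n le_rfl hn⟩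
  · have hsqrt : Filter.Tendsto Real.sqrt Filter.atTop Filter.atTop := by
      rw [Filter.tendsto_atTop_atTop]
      intro b
      refine ⟨b^2, fun z hz => ?_⟩
      have h1 := Real.sqrt_le_sqrt hz
      rw [Real.sqrt_sq_eq_abs] at h1
      linarith [le_abs_self b]
    have hfac : Filter.Tendsto (fun n : ℕ => ((n-3).factorial : ℝ)) Filter.atTop Filter.atTop := by
      apply tendsto_natCast_atTop_atTop.comp
      exact Filter.tendsto_atTop_mono (fun n => Nat.self_le_factorial (n-3))
        (Filter.tendsto_sub_atTop_nat 3)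
    have hbound : Filter.Tendsto (fun n : ℕ => C / Real.sqrt ((n-3).factorial : ℝ))
        Filter.atTop (nhds 0) :=
      Filter.Tendsto.div_atTop tendsto_const_nhds (hsqrt.comp hfac)
    exact squeeze_zero_norm' (Filter.eventually_atTop.mpr
      ⟨N, fun n hn => by simpa [Real.norm_eq_abs] using main n n le_rfl hn⟩) hbound
end
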